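/- arXiv:2109.10647 — 2 statements merged into one kernel-verified Lean document; each statement's English description precedes it below -/
import Mathlib

section
/- Let f ∈ C¹([a,b]) with a < b, and let x* ∈ [a,b] be a point where f² attains its minimum over [a,b]. Then for every z ∈ [a,b] and every ε > 0, f(z)² ≤ f(x*)² + ε² ∫_a^b |f'(x)|² dx + ε⁻² ∫_a^b f(x)² dx, and moreover f(x*)² ≤ (b-a)⁻¹ ∫_a^b f(x)² dx. -/
open Real Set MeasureTheory

/-- Key computation in the proof of the interpolation inequality: if `f ∈ C¹([a,b])`
and `x*` minimizes `f²` on `[a,b]`, then for every `z ∈ [a,b]` and `ε > 0`,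
`f(z)² ≤ f(x*)² + ε² ∫ |f'|² + ε⁻² ∫ f²`, and `f(x*)² ≤ (b-a)⁻¹ ∫ f²`. -/
theorem stmt1 (a b : ℝ) (hab : a < b) (f f' : ℝ → ℝ)
    (hf : ∀ x ∈ Icc a b, HasDerivAt f (f' x) x)
    (hf' : ContinuousOn f' (Icc a b))
    (xs : ℝ) (hxs : xs ∈ Icc a b)
    (hmin : ∀ x ∈ Icc a b, (f xs) ^ 2 ≤ (f x) ^ 2) :
    (∀ z ∈ Icc a b, ∀ ε : ℝ, 0 < ε →
      (f z) ^ 2 ≤ (f xs) ^ 2 + ε ^ 2 * (∫ x in a..b, |f' x| ^ 2) +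
        (ε ^ 2)⁻¹ * ∫ x in a..b, (f x) ^ 2) ∧
    (f xs) ^ 2 ≤ (b - a)⁻¹ * ∫ x in a..b, (f x) ^ 2 := by
  have hab' : a ≤ b := hab.le
  have hIcc : uIcc a b = Icc a b := uIcc_of_le hab'
  have hfc : ContinuousOn f (Icc a b) :=
    fun x hx => (hf x hx).continuousAt.continuousWithinAt
  have hgc : ContinuousOn (fun x => 2 * f x * f' x) (Icc a b) :=
    (continuousOn_const.mul hfc).mul hf'
  have hgac : ContinuousOn (fun x => |2 * f x * f' x|) (Icc a b) := hgc.abs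
  have hf2c : ContinuousOn (fun x => (f x) ^ 2) (Icc a b) := hfc.pow 2
  have hf'2c : ContinuousOn (fun x => |f' x| ^ 2) (Icc a b) := (hf'.abs).pow 2
  have hgai : IntervalIntegrable (fun x => |2 * f x * f' x|) volume a b :=
    (hgac.mono hIcc.subset).intervalIntegrable
  have hf2i : IntervalIntegrable (fun x => (f x) ^ 2) volume a b :=
    (hf2c.mono hIcc.subset).intervalIntegrable
  have hf'2i : IntervalIntegrable (fun x => |f' x| ^ 2) volume a b :=
    (hf'2c.mono hIcc.subset).intervalIntegrable
  constructor
  · intro z hz ε hε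
    have hsub : uIcc xs z ⊆ Icc a b := uIcc_subset_Icc hxs hz
    have hderiv : ∀ x ∈ uIcc xs z, HasDerivAt (fun x => (f x) ^ 2) (2 * f x * f' x) x := by
      intro x hx
      have h := (hf x (hsub hx)).fun_pow 2
      simpa [mul_comm, mul_assoc] using h
    have hint : IntervalIntegrable (fun x => 2 * f x * f' x) volume xs z :=
      ((hgc.mono hsub).intervalIntegrable)
    have key : (∫ x in xs..z, 2 * f x * f' x) = (f z) ^ 2 - (f xs) ^ 2 :=
      intervalIntegral.integral_eq_sub_of_hasDerivAt hderiv hint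
    -- step 1: bound the signed integral by the integral of |g| over [a,b]
    have step1 : (∫ x in xs..z, 2 * f x * f' x) ≤ ∫ x in a..b, |2 * f x * f' x| := by
      have habs : ∀ c d, c ∈ Icc a b → d ∈ Icc a b → c ≤ d →
          (∫ x in c..d, 2 * f x * f' x) ≤ ∫ x in a..b, |2 * f x * f' x| := by
        intro c d hc hd hcd
        have hsub2 : uIcc c d ⊆ Icc a b := uIcc_subset_Icc hc hd
        have h1 : (∫ x in c..d, 2 * f x * f' x) ≤ ∫ x in c..d, |2 * f x * f' x| := by
          apply intervalIntegral.integral_mono_on hcd ((hgc.mono hsub2).intervalIntegrable)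
            ((hgac.mono hsub2).intervalIntegrable)
          intro x _; exact le_abs_self _
        have h2 : (∫ x in c..d, |2 * f x * f' x|) ≤ ∫ x in a..b, |2 * f x * f' x| := by
          apply intervalIntegral.integral_mono_interval hc.1 hcd hd.2 _ hgai
          filter_upwards with x using abs_nonneg _
        linarith
      rcases le_total xs z with h | h
      · exact habs xs z hxs hz h
      · have hsub2 : uIcc z xs ⊆ Icc a b := uIcc_subset_Icc hz hxs
        have hflip : (∫ x in xs..z, 2 * f x * f' x) = ∫ x in z..xs, -(2 * f x * f' x) := by
          rw [intervalIntegral.integral_neg, ← intervalIntegral.integral_symm]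
        have hA : (∫ x in z..xs, -(2 * f x * f' x)) ≤ ∫ x in z..xs, |2 * f x * f' x| := by
          apply intervalIntegral.integral_mono_on h ((hgc.mono hsub2).intervalIntegrable.neg)
            ((hgac.mono hsub2).intervalIntegrable)
          intro x _; exact neg_le_abs _
        have hB : (∫ x in z..xs, |2 * f x * f' x|) ≤ ∫ x in a..b, |2 * f x * f' x| := by
          apply intervalIntegral.integral_mono_interval hz.1 h hxs.2 _ hgai
          filter_upwards with x using abs_nonneg _
        linarith [hflip ▸ hA]
    -- step 2: pointwise Young inequality
    have step2 : (∫ x in a..b, |2 * f x * f' x|) ≤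
        ε ^ 2 * (∫ x in a..b, |f' x| ^ 2) + (ε ^ 2)⁻¹ * ∫ x in a..b, (f x) ^ 2 := by
      have hmono : (∫ x in a..b, |2 * f x * f' x|) ≤
          ∫ x in a..b, (ε ^ 2 * |f' x| ^ 2 + (ε ^ 2)⁻¹ * (f x) ^ 2) := by
        apply intervalIntegral.integral_mono_on hab' hgai
          ((hf'2i.const_mul _).add (hf2i.const_mul _))
        intro x _
        have h1 : |2 * f x * f' x| = 2 * |f x| * |f' x| := by
          rw [abs_mul, abs_mul]; simp [abs_of_nonneg, mul_comm]
        have h2 : (f x) ^ 2 = |f x| ^ 2 := (sq_abs _).symm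
        have hε2 : 0 < ε ^ 2 := by positivity
        have hamgm : 2 * |f x| * |f' x| ≤ ε ^ 2 * |f' x| ^ 2 + (ε ^ 2)⁻¹ * |f x| ^ 2 := by
          rw [← inv_pow]
          have e : ε * ε⁻¹ * (|f x| * |f' x|) = |f x| * |f' x| := by
            rw [mul_inv_cancel₀ (ne_of_gt hε), one_mul]
          nlinarith [sq_nonneg (ε * |f' x| - ε⁻¹ * |f x|), e,
            abs_nonneg (f x), abs_nonneg (f' x)]
        rw [h1, h2]; exact hamgm
      have hsplit : (∫ x in a..b, (ε ^ 2 * |f' x| ^ 2 + (ε ^ 2)⁻¹ * (f x) ^ 2)) =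
          ε ^ 2 * (∫ x in a..b, |f' x| ^ 2) + (ε ^ 2)⁻¹ * ∫ x in a..b, (f x) ^ 2 := by
        rw [intervalIntegral.integral_add (hf'2i.const_mul _) (hf2i.const_mul _),
          intervalIntegral.integral_const_mul, intervalIntegral.integral_const_mul]
      linarith
    linarith
  · have h1 : (∫ _x in a..b, (f xs) ^ 2) ≤ ∫ x in a..b, (f x) ^ 2 := by
      apply intervalIntegral.integral_mono_on hab' intervalIntegrable_const hf2i
      intro x hx; exact hmin x hx
    rw [intervalIntegral.integral_const, smul_eq_mul] at h1
    have hba : 0 < b - a := by linarith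
    rw [le_inv_mul_iff₀ hba]
    linarith
end

section
/- Let D₂ ⊂ ℝ be a bounded measurable set, let a₂, i₀ : D₂ → ℝ be measurable with a₂(x) i₀(x) ≥ c > 0 for a.e. x ∈ D₂, and let β > 0. For φ₁, φ₂, φ̂₁, φ̂₂ ∈ L²(D₂) and a fixed measurable function m : D₂ → ℝ, set η = φ₂ − φ₁ − m and η̂ = φ̂₂ − φ̂₁ − m. Then ∫_{D₂} a₂ i₀ (sinh(β η) − sinh(β η̂)) ((φ₂ − φ̂₂) − (φ₁ − φ̂₁)) dx ≥ c β ∫_{D₂} ((φ₂ − φ̂₂) − (φ₁ − φ̂₁))² dx ≥ 0. -/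
open Real Set MeasureTheory

private lemma sinh_sub_ge (a b : ℝ) (h : b ≤ a) : a - b ≤ Real.sinh a - Real.sinh b := by
  have hmono : Monotone (fun x : ℝ => Real.sinh x - x) := by
    apply monotone_of_deriv_nonneg
    · exact (Real.differentiable_sinh.sub differentiable_id)
    · intro x
      have : deriv (fun x : ℝ => Real.sinh x - x) x = Real.cosh x - 1 := by
        simp [Real.deriv_sinh]
      rw [this]
      linarith [Real.one_le_cosh x]
  have := hmono h
  simp only at this
  linarith

private lemma key (s t : ℝ) (β : ℝ) (hβ : 0 < β) :
    β * (s - t) ^ 2 ≤ (Real.sinh (β * s) - Real.sinh (β * t)) * (s - t) := by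
  rcases le_total t s with h | h
  · have h1 := sinh_sub_ge (β * s) (β * t) (by nlinarith)
    nlinarith [sq_nonneg (s - t)]
  · have h1 := sinh_sub_ge (β * t) (β * s) (by nlinarith)
    nlinarith [sq_nonneg (s - t)]

/-- Monotonicity of the Butler–Volmer operator: with `η = φ₂ − φ₁ − m`,
`η̂ = φ̂₂ − φ̂₁ − m` and `a₂ i₀ ≥ c > 0` a.e. on `D₂`,
`∫ a₂ i₀ (sinh(βη) − sinh(βη̂)) ((φ₂−φ̂₂) − (φ₁−φ̂₁)) ≥ cβ ∫ ((φ₂−φ̂₂)−(φ₁−φ̂₁))² ≥ 0`. -/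
theorem stmt10 (D₂ : Set ℝ) (hD : MeasurableSet D₂) (hbdd : Bornology.IsBounded D₂)
    (a₂ i₀ m φ₁ φ₂ ψ₁ ψ₂ : ℝ → ℝ) (c β : ℝ) (hc : 0 < c) (hβ : 0 < β)
    (hlb : ∀ᵐ x ∂(MeasureTheory.volume.restrict D₂), c ≤ a₂ x * i₀ x)
    (hint1 : IntegrableOn (fun x => a₂ x * i₀ x *
        (Real.sinh (β * ((φ₂ x - φ₁ x) - m x)) -
          Real.sinh (β * ((ψ₂ x - ψ₁ x) - m x))) *
        ((φ₂ x - ψ₂ x) - (φ₁ x - ψ₁ x))) D₂ MeasureTheory.volume)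
    (hint2 : IntegrableOn (fun x => ((φ₂ x - ψ₂ x) - (φ₁ x - ψ₁ x)) ^ 2) D₂
      MeasureTheory.volume) :
    c * β * (∫ x in D₂, ((φ₂ x - ψ₂ x) - (φ₁ x - ψ₁ x)) ^ 2) ≤
      (∫ x in D₂, a₂ x * i₀ x *
        (Real.sinh (β * ((φ₂ x - φ₁ x) - m x)) -
          Real.sinh (β * ((ψ₂ x - ψ₁ x) - m x))) *
        ((φ₂ x - ψ₂ x) - (φ₁ x - ψ₁ x))) ∧
    0 ≤ c * β * ∫ x in D₂, ((φ₂ x - ψ₂ x) - (φ₁ x - ψ₁ x)) ^ 2 := by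
  have hnn : 0 ≤ ∫ x in D₂, ((φ₂ x - ψ₂ x) - (φ₁ x - ψ₁ x)) ^ 2 :=
    integral_nonneg fun x => sq_nonneg _
  constructor
  · rw [mul_assoc, ← integral_const_mul, ← integral_const_mul]
    apply integral_mono_ae ((hint2.const_mul β).const_mul c) hint1
    filter_upwards [hlb] with x hx
    set d := (φ₂ x - ψ₂ x) - (φ₁ x - ψ₁ x) with hd
    have hst : (φ₂ x - φ₁ x - m x) - (ψ₂ x - ψ₁ x - m x) = d := by ring
    have hk := key (φ₂ x - φ₁ x - m x) (ψ₂ x - ψ₁ x - m x) β hβ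
    rw [hst] at hk
    have hd2 : 0 ≤ β * d ^ 2 := by positivity
    calc c * (β * d ^ 2) ≤ a₂ x * i₀ x * (β * d ^ 2) := by nlinarith
      _ ≤ a₂ x * i₀ x *
          ((Real.sinh (β * (φ₂ x - φ₁ x - m x)) - Real.sinh (β * (ψ₂ x - ψ₁ x - m x))) * d) := by
          apply mul_le_mul_of_nonneg_left hk (le_trans hc.le hx)
      _ = _ := by ring
  · positivity
end
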